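/- Let M = 2^a with a ≥ 2, considered as the polynomial map x ↦ x^M on finite F₂-algebras. Then the closure of R(x^M) = { |{r^M : r ∈ A}|/|A| : A a finite F₂-algebra } equals [0,1]. -/

import Mathlib

set_option linter.unusedSectionVars false

/-- The image ratio of the `M`-th power map on a finite ring `A`. -/
noncomputable def ringPowerRatio (M : ℕ) (A : Type*) [Ring A] : ℝ :=
  (Nat.card {y : A | ∃ r : A, r ^ M = y} : ℝ) / (Nat.card A : ℝ)

/-- The set of image ratios of the `M`-th power map over all finite `𝔽₂`-algebras. -/
def ringPowerRatioSet (M : ℕ) : Set ℝ :=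
  {x : ℝ | ∃ (A : Type) (_ : Ring A) (_ : Algebra (ZMod 2) A) (_ : Finite A),
    ringPowerRatio M A = x}

/-! ### Auxiliary counting lemmas -/

lemma nat_card_sprod {α β : Type*} (s : Set α) (t : Set β) :
    Nat.card ↥(s ×ˢ t) = Nat.card s * Nat.card t := by
  rw [Nat.card_congr (Equiv.Set.prod s t), Nat.card_prod]

lemma powerSet_eq_range (M : ℕ) (A : Type*) [Ring A] :
    {y : A | ∃ r : A, r ^ M = y} = Set.range (fun r : A => r ^ M) := rfl

/-! ### The twisted dual numbers `F ⊕ Fε`, `ε² = 0`, `ε c = c² ε`. -/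

def Tw (F : Type) : Type := F × F

namespace Tw
variable {F : Type} [Field F] [CharP F 2]

instance instAdd : AddCommGroup (Tw F) := inferInstanceAs (AddCommGroup (F × F))
instance : Mul (Tw F) := ⟨fun p q => (p.1 * q.1, p.1 * q.2 + p.2 * (q.1 * q.1))⟩
instance : One (Tw F) := ⟨((1 : F), (0 : F))⟩

@[simp] lemma fst_mul (p q : Tw F) : (p * q).1 = p.1 * q.1 := rfl
@[simp] lemma snd_mul (p q : Tw F) : (p * q).2 = p.1 * q.2 + p.2 * (q.1 * q.1) := rfl
@[simp] lemma fst_one : (1 : Tw F).1 = 1 := rfl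
@[simp] lemma snd_one : (1 : Tw F).2 = 0 := rfl
@[simp] lemma fst_zero : (0 : Tw F).1 = 0 := rfl
@[simp] lemma snd_zero : (0 : Tw F).2 = 0 := rfl
@[simp] lemma fst_add (p q : Tw F) : (p + q).1 = p.1 + q.1 := rfl
@[simp] lemma snd_add (p q : Tw F) : (p + q).2 = p.2 + q.2 := rfl

lemma two_eq_zero_F : (2 : F) = 0 := by
  have := CharP.cast_eq_zero F 2; exact_mod_cast this

instance instRing : Ring (Tw F) where
  __ := (instAdd : AddCommGroup (Tw F))
  mul := (· * ·)
  one := 1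
  mul_assoc p q r := by refine Prod.ext ?_ ?_ <;> simp <;> ring
  one_mul p := by refine Prod.ext ?_ ?_ <;> simp
  mul_one p := by refine Prod.ext ?_ ?_ <;> simp
  left_distrib p q r := by
    refine Prod.ext ?_ ?_ <;> simp <;> ring_nf
    rw [two_eq_zero_F]; ring
  right_distrib p q r := by refine Prod.ext ?_ ?_ <;> simp <;> ring
  zero_mul p := by refine Prod.ext ?_ ?_ <;> simp
  mul_zero p := by refine Prod.ext ?_ ?_ <;> simp

lemma natCast_def (n : ℕ) : ((n : ℕ) : Tw F) = (((n : F) : F), (0:F)) := by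
  induction n with
  | zero => simp [Prod.ext_iff]; rfl
  | succ k ih =>
    rw [Nat.cast_succ, Nat.cast_succ, ih]
    show ((k:F) + 1, (0:F) + 0) = ((k:F) + 1, (0:F))
    rw [add_zero]

instance : CharP (Tw F) 2 := by
  constructor
  intro n
  rw [natCast_def]
  show ((n:F), (0:F)) = ((0:F), (0:F)) ↔ 2 ∣ n
  rw [Prod.ext_iff]
  simp [CharP.cast_eq_zero_iff F 2 n]

noncomputable instance : Algebra (ZMod 2) (Tw F) := ZMod.algebra _ 2

lemma pow_two_pow (p : Tw F) (a : ℕ) :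
    @Eq (Tw F) (p ^ (2^a)) ((p.1 ^ 2^a, p.2 * (p.1 + p.1 * p.1) ^ (2^a - 1)) : Tw F) := by
  induction a with
  | zero =>
    refine Prod.ext ?_ ?_ <;> simp [pow_one]
  | succ n ih =>
    have h2 : 2^(n+1) = 2^n * 2 := by rw [pow_succ]
    rw [h2, pow_mul, ih]
    refine (pow_two _).trans ?_
    have hd : (p.1 + p.1 * p.1) ^ (2^n) = p.1^(2^n) + p.1^(2^n) * p.1^(2^n) := by
      rw [add_pow_char_pow, mul_pow]
    have hexp : (2^n - 1) + 2^n = 2^n * 2 - 1 := by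
      have : 1 ≤ 2^n := Nat.one_le_two_pow
      omega
    refine Prod.ext ?_ ?_
    · show p.1 ^ 2 ^ n * p.1 ^ 2 ^ n = p.1 ^ (2 ^ n * 2)
      rw [← pow_add]; congr 1; omega
    · show p.1 ^ 2 ^ n * (p.2 * (p.1 + p.1 * p.1) ^ (2 ^ n - 1)) +
          p.2 * (p.1 + p.1 * p.1) ^ (2 ^ n - 1) * (p.1 ^ 2 ^ n * p.1 ^ 2 ^ n) =
          p.2 * (p.1 + p.1 * p.1) ^ (2 ^ n * 2 - 1)
      rw [← hexp, pow_add, hd]; ring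

variable [Finite F]

lemma pow_surj (a : ℕ) : Function.Surjective (fun c : F => c ^ 2^a) := by
  have hinj : Function.Injective (fun c : F => c ^ 2^a) := by
    have := iterateFrobenius_inj F 2 a
    intro x y h
    apply this
    simpa [iterateFrobenius_def] using h
  exact Finite.surjective_of_injective hinj

lemma mem_range_of_fst (a : ℕ) (p : Tw F) (h0 : p.1 ≠ 0) (h1 : p.1 ≠ 1) :
    p ∈ Set.range (fun r : Tw F => r ^ 2^a) := by
  obtain ⟨c, hc⟩ := pow_surj (F := F) a p.1
  simp only at hc
  have hc0 : c ≠ 0 := by rintro rfl; apply h0; rw [← hc, zero_pow (by positivity : (2:ℕ)^a ≠ 0)]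
  have hc1 : c ≠ 1 := by rintro rfl; apply h1; rw [← hc]; simp
  have hg : c + c * c ≠ 0 := by
    intro h
    have h' : c * (1 + c) = 0 := by rw [← h]; ring
    rcases mul_eq_zero.mp h' with h'' | h''
    · exact hc0 h''
    · apply hc1
      have : c = -1 := by linear_combination h''
      rw [this, CharTwo.neg_eq]
  have hgpow : (c + c * c) ^ (2^a - 1) ≠ 0 := pow_ne_zero _ hg
  refine ⟨(⟨c, p.2 * ((c + c * c) ^ (2^a - 1))⁻¹⟩ : Tw F), ?_⟩
  have key := pow_two_pow (⟨c, p.2 * ((c + c * c) ^ (2^a - 1))⁻¹⟩ : Tw F) a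
  refine key.trans ?_
  refine Prod.ext ?_ ?_
  · exact hc
  · show p.2 * ((c + c * c) ^ (2^a - 1))⁻¹ * (c + c * c) ^ (2^a - 1) = p.2
    rw [mul_assoc, inv_mul_cancel₀ hgpow, mul_one]

lemma not_mem_range (a : ℕ) (ha : 1 ≤ a) :
    (((0 : F), (1 : F)) : Tw F) ∉ Set.range (fun r : Tw F => r ^ 2^a) := by
  rintro ⟨p, hp⟩
  simp only at hp
  replace hp : p ^ 2 ^ a = (((0 : F), (1 : F)) : Tw F) := hp
  replace hp := (pow_two_pow p a).symm.trans hp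
  have h1 := congrArg Prod.fst hp
  have h2 := congrArg Prod.snd hp
  simp only at h1 h2
  have hc : p.1 = 0 := by
    have := pow_eq_zero_iff (n := 2^a) (by positivity) |>.mp h1
    exact this
  rw [hc] at h2
  have hM1 : 1 ≤ 2^a - 1 := by
    have h4 : 2 ≤ 2^a := by
      calc (2:ℕ) = 2^1 := rfl
      _ ≤ 2^a := Nat.pow_le_pow_right (by norm_num) ha
    omega
  have hz : ((0:F) + 0 * 0) ^ (2^a - 1) = 0 := by
    rw [show (0:F) + 0 * 0 = 0 from by ring]
    exact zero_pow (by omega)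
  rw [hz, mul_zero] at h2
  exact one_ne_zero h2.symm

end Tw

/-! ### Counting the image in `Tw F` -/

namespace Tw
variable {F : Type} [Field F] [CharP F 2] [Finite F]

instance : Finite (Tw F) := inferInstanceAs (Finite (F × F))

lemma card_Tw : Nat.card (Tw F) = Nat.card F * Nat.card F := by
  have : Nat.card (Tw F) = Nat.card (F × F) := rfl
  rw [this, Nat.card_prod]

lemma ncard_range_le (a : ℕ) (ha : 1 ≤ a) :
    (Set.range (fun r : Tw F => r ^ 2^a)).ncard + 1 ≤ Nat.card F * Nat.card F := by
  set R := Set.range (fun r : Tw F => r ^ 2^a) with hR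
  have hcompl : R.ncard + Rᶜ.ncard = Nat.card (Tw F) := Set.ncard_add_ncard_compl R
  have hne : Rᶜ.Nonempty := ⟨(((0:F), (1:F)) : Tw F), not_mem_range a ha⟩
  have h1 : 1 ≤ Rᶜ.ncard := (Set.ncard_pos (Set.toFinite _)).mpr hne
  rw [card_Tw] at hcompl
  omega

lemma ncard_range_ge (a : ℕ) :
    Nat.card F * Nat.card F ≤ (Set.range (fun r : Tw F => r ^ 2^a)).ncard + 2 * Nat.card F := by
  set R := Set.range (fun r : Tw F => r ^ 2^a) with hR
  have hcompl : R.ncard + Rᶜ.ncard = Nat.card (Tw F) := Set.ncard_add_ncard_compl R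
  have hsub : Rᶜ ⊆ (({0, 1} : Set F) ×ˢ (Set.univ : Set F)) := by
    intro p hp
    show (p : F × F) ∈ (({0, 1} : Set F) ×ˢ (Set.univ : Set F))
    apply Set.mem_prod.mpr
    refine ⟨?_, Set.mem_univ _⟩
    by_contra hmem
    simp only [Set.mem_insert_iff, Set.mem_singleton_iff] at hmem
    push_neg at hmem
    exact hp (mem_range_of_fst a p hmem.1 hmem.2)
  have hcard : (({0, 1} : Set F) ×ˢ (Set.univ : Set F)).ncard = 2 * Nat.card F := by
    rw [← Nat.card_coe_set_eq, nat_card_sprod, Nat.card_coe_set_eq, Nat.card_coe_set_eq,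
      Set.ncard_pair (zero_ne_one), Set.ncard_univ]
  have hle : Rᶜ.ncard ≤ 2 * Nat.card F := by
    rw [← hcard]; exact Set.ncard_le_ncard hsub (Set.toFinite _)
  rw [card_Tw] at hcompl
  omega

lemma ratio_eq (a : ℕ) :
    ringPowerRatio (2^a) (Tw F) =
      ((Set.range (fun r : Tw F => r ^ 2^a)).ncard : ℝ) /
        ((Nat.card F : ℝ) * (Nat.card F : ℝ)) := by
  rw [ringPowerRatio, powerSet_eq_range, Nat.card_coe_set_eq, card_Tw]
  push_cast
  ring

lemma ratio_le (a : ℕ) (ha : 1 ≤ a) (hF : 2 ≤ Nat.card F) :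
    ringPowerRatio (2^a) (Tw F) ≤ 1 - 1 / ((Nat.card F : ℝ) * (Nat.card F : ℝ)) := by
  have hq : (2:ℝ) ≤ (Nat.card F : ℝ) := by exact_mod_cast hF
  have h := ncard_range_le (F := F) a ha
  have h' : ((Set.range (fun r : Tw F => r ^ 2^a)).ncard : ℝ) + 1 ≤
      (Nat.card F : ℝ) * (Nat.card F : ℝ) := by exact_mod_cast h
  have hQ0 : (0:ℝ) < (Nat.card F : ℝ) * (Nat.card F : ℝ) := by nlinarith
  rw [ratio_eq a, div_le_iff₀ hQ0]
  have hkey : (1 - 1 / ((Nat.card F : ℝ) * (Nat.card F : ℝ))) * ((Nat.card F : ℝ) * (Nat.card F : ℝ))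
      = (Nat.card F : ℝ) * (Nat.card F : ℝ) - 1 := by
    field_simp
  rw [hkey]
  linarith

lemma ratio_ge (a : ℕ) (hF : 2 ≤ Nat.card F) :
    1 - 2 / (Nat.card F : ℝ) ≤ ringPowerRatio (2^a) (Tw F) := by
  have hq : (2:ℝ) ≤ (Nat.card F : ℝ) := by exact_mod_cast hF
  have h := ncard_range_ge (F := F) a
  have h' : (Nat.card F : ℝ) * (Nat.card F : ℝ) ≤
      ((Set.range (fun r : Tw F => r ^ 2^a)).ncard : ℝ) + 2 * (Nat.card F : ℝ) := by
    exact_mod_cast h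
  have hQ0 : (0:ℝ) < (Nat.card F : ℝ) * (Nat.card F : ℝ) := by nlinarith
  rw [ratio_eq a, le_div_iff₀ hQ0]
  have hkey : (1 - 2 / (Nat.card F : ℝ)) * ((Nat.card F : ℝ) * (Nat.card F : ℝ))
      = (Nat.card F : ℝ) * (Nat.card F : ℝ) - 2 * (Nat.card F : ℝ) := by
    field_simp
  rw [hkey]
  linarith

lemma ratio_nonneg (a : ℕ) : 0 ≤ ringPowerRatio (2^a) (Tw F) := by
  rw [ringPowerRatio]; positivity

end Tw

/-! ### Closure properties of the ratio set -/

lemma zmod_two_pow_two_pow (y : ZMod 2) (a : ℕ) : y ^ 2^a = y := by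
  induction a with
  | zero => rw [pow_zero, pow_one]
  | succ n ih => rw [pow_succ, pow_mul, ih, ZMod.pow_card]

lemma one_mem_ringPowerRatioSet (a : ℕ) : (1:ℝ) ∈ ringPowerRatioSet (2^a) := by
  refine ⟨ZMod 2, inferInstance, Algebra.id (ZMod 2), inferInstance, ?_⟩
  have hset : {y : ZMod 2 | ∃ r : ZMod 2, r ^ 2^a = y} = Set.univ := by
    ext y
    simp only [Set.mem_setOf_eq, Set.mem_univ, iff_true]
    exact ⟨y, zmod_two_pow_two_pow y a⟩
  rw [ringPowerRatio, hset]
  rw [Nat.card_congr (Equiv.Set.univ _)]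
  have : (Nat.card (ZMod 2) : ℝ) ≠ 0 := by
    rw [Nat.card_eq_fintype_card]; simp
  exact div_self this

lemma mul_mem_ringPowerRatioSet {M : ℕ} {x y : ℝ} (hx : x ∈ ringPowerRatioSet M)
    (hy : y ∈ ringPowerRatioSet M) : x * y ∈ ringPowerRatioSet M := by
  obtain ⟨A, iA, aA, fA, hA⟩ := hx
  obtain ⟨B, iB, aB, fB, hB⟩ := hy
  refine ⟨A × B, inferInstance, inferInstance, inferInstance, ?_⟩
  have hset : {y : A × B | ∃ r : A × B, r ^ M = y} =
      {u : A | ∃ r : A, r ^ M = u} ×ˢ {v : B | ∃ r : B, r ^ M = v} := by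
    ext ⟨u, v⟩
    simp only [Set.mem_setOf_eq, Set.mem_prod]
    constructor
    · rintro ⟨r, hr⟩
      exact ⟨⟨r.1, congrArg Prod.fst hr⟩, ⟨r.2, congrArg Prod.snd hr⟩⟩
    · rintro ⟨⟨r1, hr1⟩, ⟨r2, hr2⟩⟩
      exact ⟨(r1, r2), Prod.ext hr1 hr2⟩
  rw [← hA, ← hB, ringPowerRatio, ringPowerRatio, ringPowerRatio, hset,
    nat_card_sprod, Nat.card_prod]
  push_cast
  rw [div_mul_div_comm]

lemma pow_mem_ringPowerRatioSet {a : ℕ} {x : ℝ} (hx : x ∈ ringPowerRatioSet (2^a)) :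
    ∀ k : ℕ, x ^ k ∈ ringPowerRatioSet (2^a) := by
  intro k
  induction k with
  | zero => rw [pow_zero]; exact one_mem_ringPowerRatioSet a
  | succ n ih => rw [pow_succ]; exact mul_mem_ringPowerRatioSet ih hx

lemma ringPowerRatioSet_subset_Icc (M : ℕ) : ringPowerRatioSet M ⊆ Set.Icc (0:ℝ) 1 := by
  rintro x ⟨A, iA, aA, fA, rfl⟩
  constructor
  · rw [ringPowerRatio]; positivity
  · rw [ringPowerRatio]
    apply div_le_one_of_le₀
    · exact_mod_cast Nat.card_le_card_of_injective
        (Subtype.val : {y : A | ∃ r : A, r ^ M = y} → A) Subtype.val_injective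
    · positivity

lemma galois_ratio_mem (a r : ℕ) :
    ringPowerRatio (2^a) (Tw (GaloisField 2 r)) ∈ ringPowerRatioSet (2^a) :=
  ⟨Tw (GaloisField 2 r), inferInstance, inferInstance, inferInstance, rfl⟩

theorem closure_ringPowerRatioSet_eq_Icc (a M : ℕ) (ha : 2 ≤ a) (hM : M = 2 ^ a) :
    closure (ringPowerRatioSet M) = Set.Icc (0 : ℝ) 1 := by
  subst hM
  apply le_antisymm
  · exact closure_minimal (ringPowerRatioSet_subset_Icc _) isClosed_Icc
  · intro t ht
    obtain ⟨ht0, ht1⟩ := ht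
    rw [Metric.mem_closure_iff]
    intro ε hε
    set ε' := min ε 1 with hε'def
    have hε'0 : 0 < ε' := lt_min hε one_pos
    have hε'1 : ε' ≤ 1 := min_le_right _ _
    have hε'ε : ε' ≤ ε := min_le_left _ _
    by_cases ht : t = 1
    · exact ⟨1, one_mem_ringPowerRatioSet a, by rw [ht]; simpa using hε⟩
    · have htlt : t < 1 := lt_of_le_of_ne ht1 ht
      obtain ⟨r, hr⟩ := pow_unbounded_of_one_lt (R := ℝ) (4 / ε') one_lt_two
      have h4 : (4:ℝ) ≤ 4 / ε' := by
        rw [le_div_iff₀ hε'0]; nlinarith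
      have hrne : r ≠ 0 := by
        rintro rfl
        rw [pow_zero] at hr
        linarith
      set F := GaloisField 2 r with hFdef
      have hcardF : Nat.card F = 2^r := GaloisField.card 2 r hrne
      have hF2 : 2 ≤ Nat.card F := by
        rw [hcardF]
        calc (2:ℕ) = 2^1 := rfl
        _ ≤ 2^r := Nat.pow_le_pow_right (by norm_num) (by omega)
      have hQ : (4/ε' : ℝ) ≤ (Nat.card F : ℝ) := by
        rw [hcardF]; push_cast; exact le_of_lt hr
      set ρ := ringPowerRatio (2^a) (Tw F) with hρdef
      have hρmem : ρ ∈ ringPowerRatioSet (2^a) := galois_ratio_mem a r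
      have hQ2 : (2:ℝ) ≤ (Nat.card F : ℝ) := by exact_mod_cast hF2
      have hρlt : ρ < 1 := by
        have h1 := Tw.ratio_le (F := F) a (by omega) hF2
        have h0 : 0 < 1/((Nat.card F:ℝ) * (Nat.card F:ℝ)) := by positivity
        linarith
      have hρge : 1 - ε'/2 ≤ ρ := by
        have h1 := Tw.ratio_ge (F := F) a hF2
        have h2 : 2 / (Nat.card F : ℝ) ≤ ε'/2 := by
          rw [div_le_div_iff₀ (by linarith) (by norm_num)]
          have : ε' * (4/ε') ≤ ε' * (Nat.card F : ℝ) :=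
            mul_le_mul_of_nonneg_left hQ (le_of_lt hε'0)
          rw [mul_div_cancel₀ _ (ne_of_gt hε'0)] at this
          nlinarith
        linarith
      have hρ0 : 0 ≤ ρ := Tw.ratio_nonneg a
      have hex : ∃ k, ρ^k < t + ε' := exists_pow_lt_of_lt_one (by linarith) hρlt
      classical
      have hk : ρ^(Nat.find hex) < t + ε' := Nat.find_spec hex
      rcases Nat.eq_zero_or_eq_succ_pred (Nat.find hex) with h0 | hsucc
      · rw [h0, pow_zero] at hk
        refine ⟨1, one_mem_ringPowerRatioSet a, ?_⟩
        rw [Real.dist_eq, abs_of_nonpos (by linarith)]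
        linarith
      · set j := (Nat.find hex) - 1 with hjdef
        have hjlt : j < Nat.find hex := by omega
        have hjge : t + ε' ≤ ρ^j := le_of_not_gt (Nat.find_min hex hjlt)
        refine ⟨ρ^(Nat.find hex), pow_mem_ringPowerRatioSet hρmem _, ?_⟩
        have hksucc : Nat.find hex = j + 1 := by omega
        have hpow : ρ^(Nat.find hex) = ρ^j * ρ := by rw [hksucc, pow_succ]
        have hlow : t ≤ ρ^(Nat.find hex) := by
          rw [hpow]
          have hmul : (t+ε') * (1-ε'/2) ≤ ρ^j * ρ :=
            mul_le_mul hjge hρge (by linarith) (by positivity)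
          nlinarith
        rw [Real.dist_eq, abs_of_nonpos (by linarith)]
        linarith
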